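/- Let G be a group containing elements x_{ts} for n ≥ t > s ≥ 1 satisfying the Birman-Ko-Lee relations: x_{ts} x_{rq} = x_{rq} x_{ts} when (t-r)(t-q)(s-r)(s-q) > 0, and x_{ts} x_{sr} = x_{tr} x_{ts} = x_{sr} x_{tr} for t > s > r. Write (t_m, t_{m-1}, ..., t_1) for the product x_{t_m t_{m-1}} x_{t_{m-1} t_{m-2}} ... x_{t_2 t_1}. Then for any descending sequence t_m > t_{m-1} > ... > t_1 and any 1 ≤ k ≤ m, one has (t_m, t_{m-1}, ..., t_1) = (t_k, ..., t_1, t_m, ..., t_{k+1}), where in mixed sequences (u, v) with u < v denotes x_{vu}. -/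

import Mathlib

/-- `bprod x [t_m, ..., t_1]` is the product `x'_{t_m t_{m-1}} ⋯ x'_{t_2 t_1}` of consecutive
band generators, where `x'_{uv} := x (max u v) (min u v)`. -/
def bprod {G : Type*} [Group G] (x : ℕ → ℕ → G) : List ℕ → G
  | [] => 1
  | [_] => 1
  | a :: b :: l => x (max a b) (min a b) * bprod x (b :: l)

/-- The descending list `[a, a-1, ..., b]` (empty if `a < b`). -/
def descList (a b : ℕ) : List ℕ := (List.range (a + 1 - b)).map (fun i => a - i)

section Aux

variable {G : Type*} [Group G]

/-- A pure group-theoretic shuffling identity. -/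
lemma bkl_shuffle (p A z m w B y : G) (h1 : p * A = A * z) (h2 : z * m = m * w)
    (h3 : B * y = w * B) : p * (A * m * B) = A * m * (B * y) := by
  rw [h3, ← mul_assoc, ← mul_assoc, h1, mul_assoc A z m, h2, ← mul_assoc, mul_assoc]

variable (x : ℕ → ℕ → G)

lemma bprod_cons (a b : ℕ) (l : List ℕ) :
    bprod x (a :: b :: l) = x (max a b) (min a b) * bprod x (b :: l) := rfl

lemma bprod_snoc : ∀ (l : List ℕ) (b a : ℕ),
    bprod x ((b :: l) ++ [a]) =
      bprod x (b :: l) * x (max ((b :: l).getLast (by simp)) a)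
        (min ((b :: l).getLast (by simp)) a)
  | [], b, a => by simp [bprod]
  | c :: l, b, a => by
    have h := bprod_snoc l c a
    simp only [List.cons_append] at h ⊢
    rw [bprod_cons, bprod_cons, h, List.getLast_cons (by simp : c :: l ≠ []), mul_assoc]

lemma bprod_append : ∀ (l₁ : List ℕ) (a : ℕ) (l₂ : List ℕ),
    bprod x (l₁ ++ a :: l₂) = bprod x (l₁ ++ [a]) * bprod x (a :: l₂)
  | [], a, l₂ => by simp [bprod]
  | [c], a, l₂ => by simp [bprod, mul_assoc]
  | c :: d :: l₁, a, l₂ => by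
    have h := bprod_append (d :: l₁) a l₂
    simp only [List.cons_append] at h ⊢
    rw [bprod_cons, bprod_cons, h, mul_assoc]

variable (n : ℕ)
variable (hband1 : ∀ t s r : ℕ, t ≤ n → s < t → r < s → 1 ≤ r →
      x t s * x s r = x t r * x t s)
variable (hband2 : ∀ t s r : ℕ, t ≤ n → s < t → r < s → 1 ≤ r →
      x t r * x t s = x s r * x t r)

include hband1 in
/-- Moving `x _ r` (with `r` below everything) from right to left across a descending chain. -/
lemma bkl_lemA : ∀ (l : List ℕ) (a r : ℕ), (a :: l).Chain' (· > ·) → 1 ≤ r →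
    (∀ v ∈ a :: l, r < v ∧ v ≤ n) →
    bprod x (a :: l) * x ((a :: l).getLast (by simp)) r = x a r * bprod x (a :: l)
  | [], a, r, _, _, _ => by simp [bprod]
  | b :: l, a, r, hc, hr, hv => by
    obtain ⟨hab, hc'⟩ := List.isChain_cons_cons.mp hc
    have hIH := bkl_lemA l b r hc' hr (fun v hv' => hv v (by simp [hv']))
    rw [bprod_cons, List.getLast_cons (by simp : b :: l ≠ []),
      max_eq_left hab.le, min_eq_right hab.le, mul_assoc, hIH, ← mul_assoc,
      hband1 a b r (hv a (by simp)).2 hab (hv b (by simp)).1 hr, mul_assoc]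

include hband1 hband2 in
/-- Moving `x T _` (with `T` above everything) from left to right across a descending chain. -/
lemma bkl_lemB : ∀ (l : List ℕ) (a T : ℕ), (a :: l).Chain' (· > ·) → T ≤ n →
    (∀ v ∈ a :: l, 1 ≤ v ∧ v < T) →
    x T a * bprod x (a :: l) = bprod x (a :: l) * x T ((a :: l).getLast (by simp))
  | [], a, T, _, _, _ => by simp [bprod]
  | b :: l, a, T, hc, hT, hv => by
    obtain ⟨hab, hc'⟩ := List.isChain_cons_cons.mp hc
    have hIH := bkl_lemB l b T hc' hT (fun v hv' => hv v (by simp [hv']))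
    have hb1 : 1 ≤ b := (hv b (by simp)).1
    have haT : a < T := (hv a (by simp)).2
    have key : x T a * x a b = x a b * x T b := by
      rw [hband1 T a b hT haT hab hb1, hband2 T a b hT haT hab hb1]
    rw [bprod_cons, List.getLast_cons (by simp : b :: l ≠ []),
      max_eq_left hab.le, min_eq_right hab.le, ← mul_assoc, key, mul_assoc, hIH, ← mul_assoc]

include hband1 hband2 in
/-- One-step rotation: `a` followed by a descending list `D` below `a` and a
descending list `U` above `a`. -/
lemma bkl_rot1 (a : ℕ) (D U : List ℕ) (hD : D ≠ [])
    (hcD : (a :: D).Chain' (· > ·)) (hcU : U.Chain' (· > ·))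
    (hUa : ∀ v ∈ U, a < v) (hall : ∀ v ∈ a :: (D ++ U), 1 ≤ v ∧ v ≤ n) :
    bprod x (a :: (D ++ U)) = bprod x ((D ++ U) ++ [a]) := by
  obtain ⟨d, D', rfl⟩ := List.exists_cons_of_ne_nil hD
  obtain ⟨had, hcD'⟩ := List.isChain_cons_cons.mp hcD
  have hpaD : (a :: d :: D').Pairwise (· > ·) := List.isChain_iff_pairwise.mp hcD
  have hDlt : ∀ v ∈ d :: D', v < a := fun v hv => (List.pairwise_cons.mp hpaD).1 v hv
  have ha : 1 ≤ a ∧ a ≤ n := hall a (List.mem_cons_self)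
  have hDmem : ∀ v ∈ d :: D', 1 ≤ v ∧ v ≤ n := fun v hv =>
    hall v (List.mem_cons_of_mem _ (List.mem_append_left _ hv))
  have hUmem : ∀ v ∈ U, 1 ≤ v ∧ v ≤ n := fun v hv =>
    hall v (List.mem_cons_of_mem _ (List.mem_append_right _ hv))
  have hB := bkl_lemB x n hband1 hband2 D' d a hcD' ha.2
    (fun v hv => ⟨(hDmem v hv).1, hDlt v hv⟩)
  obtain ⟨gD, hgDdef⟩ : ∃ g, (d :: D').getLast (by simp) = g := ⟨_, rfl⟩
  have hgDmem : gD ∈ d :: D' := hgDdef ▸ List.getLast_mem _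
  have hgDa : gD < a := hDlt gD hgDmem
  rw [hgDdef] at hB
  cases U with
  | nil =>
    simp only [List.append_nil]
    rw [bprod_cons, max_eq_left had.le, min_eq_right had.le, hB, bprod_snoc,
      hgDdef, max_eq_right hgDa.le, min_eq_left hgDa.le]
  | cons u U' =>
    have hau : a < u := hUa u (List.mem_cons_self)
    have hgDu : gD < u := lt_trans hgDa hau
    have hA := bkl_lemA x n hband1 U' u a hcU ha.1
      (fun v hv => ⟨hUa v hv, (hUmem v hv).2⟩)
    obtain ⟨gU, hgUdef⟩ : ∃ g, (u :: U').getLast (by simp) = g := ⟨_, rfl⟩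
    have hgUmem : gU ∈ u :: U' := hgUdef ▸ List.getLast_mem _
    have hgUa : a < gU := hUa gU hgUmem
    rw [hgUdef] at hA
    have key : x a gD * x u gD = x u gD * x u a :=
      (hband2 u a gD (hUmem u (List.mem_cons_self)).2 hau hgDa
        (hDmem gD hgDmem).1).symm
    have happ : bprod x (d :: (D' ++ u :: U')) =
        bprod x (d :: D') * x u gD * bprod x (u :: U') := by
      have h1 := bprod_append x (d :: D') u U'
      have h2 := bprod_snoc x D' d u
      simp only [List.cons_append] at h1 h2
      rw [h1, h2, hgDdef, max_eq_right hgDu.le, min_eq_left hgDu.le]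
    have happ2 : bprod x (d :: (D' ++ (u :: (U' ++ [a])))) =
        bprod x (d :: D') * x u gD * (bprod x (u :: U') * x gU a) := by
      have h1 := bprod_append x (d :: D') u (U' ++ [a])
      have h2 := bprod_snoc x D' d u
      have h3 := bprod_snoc x U' u a
      simp only [List.cons_append] at h1 h2 h3
      rw [h1, h2, h3, hgDdef, hgUdef, max_eq_right hgDu.le, min_eq_left hgDu.le,
        max_eq_left hgUa.le, min_eq_right hgUa.le]
    simp only [List.cons_append, List.append_assoc]
    rw [bprod_cons, max_eq_left had.le, min_eq_right had.le, happ, happ2]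
    exact bkl_shuffle _ _ _ _ _ _ _ hB key hA

include hband1 hband2 in
lemma bkl_rot : ∀ (j : ℕ) (l : List ℕ), l.Chain' (· > ·) →
    (∀ u ∈ l, 1 ≤ u ∧ u ≤ n) → j + 1 ≤ l.length →
    bprod x l = bprod x (l.rotate j)
  | 0, l, _, _, _ => by simp
  | j + 1, l, hc, hall, hj => by
    have hIH := bkl_rot j l hc hall (by omega)
    have hjlen : j ≤ l.length := by omega
    have hrot : l.rotate j = l.drop j ++ l.take j := List.rotate_eq_drop_append_take hjlen
    have hdroplen : 2 ≤ (l.drop j).length := by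
      rw [List.length_drop]; omega
    obtain ⟨a, D, hDrop⟩ : ∃ a D, l.drop j = a :: D := by
      cases h : l.drop j with
      | nil => rw [h] at hdroplen; simp at hdroplen
      | cons a D => exact ⟨a, D, rfl⟩
    have hDne : D ≠ [] := by
      intro h; rw [h] at hDrop; rw [hDrop] at hdroplen; simp at hdroplen
    have hp : l.Pairwise (· > ·) := List.isChain_iff_pairwise.mp hc
    have hl : l = l.take j ++ l.drop j := (List.take_append_drop j l).symm
    rw [hl, List.pairwise_append] at hp
    obtain ⟨hpU, hpD, hcross⟩ := hp
    have hcaD : (a :: D).Chain' (· > ·) := by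
      refine List.isChain_iff_pairwise.mpr ?_; rw [hDrop] at hpD; exact hpD
    have hcU : (l.take j).Chain' (· > ·) := by
      refine List.isChain_iff_pairwise.mpr ?_; exact hpU
    have hUa : ∀ v ∈ l.take j, a < v := fun v hv =>
      hcross v hv a (by rw [hDrop]; simp)
    have hall' : ∀ v ∈ a :: (D ++ l.take j), 1 ≤ v ∧ v ≤ n := by
      intro v hv
      apply hall
      rw [hl]
      simp only [List.mem_cons, List.mem_append] at hv
      rw [List.mem_append, hDrop]
      rcases hv with h | h | h
      · simp [h]
      · simp [h]
      · exact Or.inl h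
    have h1 : l.rotate j = a :: (D ++ l.take j) := by rw [hrot, hDrop]; simp
    have h2 : l.rotate (j + 1) = (D ++ l.take j) ++ [a] := by
      rw [← List.rotate_rotate, h1]
      simp [List.rotate_cons_succ]
    rw [hIH, h1, h2]
    exact bkl_rot1 x n hband1 hband2 a D (l.take j) hDne hcaD hcU hUa hall'

end Aux

theorem bkl_lemma1 {G : Type*} [Group G] (n : ℕ) (x : ℕ → ℕ → G)
    (hcomm : ∀ t s r q : ℕ, t ≤ n → s < t → 1 ≤ s → r ≤ n → q < r → 1 ≤ q →
      0 < ((t : ℤ) - r) * ((t : ℤ) - q) * ((s : ℤ) - r) * ((s : ℤ) - q) →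
      x t s * x r q = x r q * x t s)
    (hband1 : ∀ t s r : ℕ, t ≤ n → s < t → r < s → 1 ≤ r →
      x t s * x s r = x t r * x t s)
    (hband2 : ∀ t s r : ℕ, t ≤ n → s < t → r < s → 1 ≤ r →
      x t r * x t s = x s r * x t r) :
    ∀ (m k : ℕ) (l : List ℕ), l.length = m → l.Chain' (· > ·) →
      (∀ u ∈ l, 1 ≤ u ∧ u ≤ n) → 1 ≤ k → k ≤ m →
      bprod x l = bprod x (l.rotate (m - k)) := by
  intro m k l hlen hc hall hk1 hk2
  exact bkl_rot x n hband1 hband2 (m - k) l hc hall (by omega)
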